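/- Let n₁, n₂ ≥ 1 be integers, x₁, x₂ ∈ ℤ, and a₁, b₁, a₂, b₂ ∈ ℝ. For 1 ≤ k ≤ n₂ set Ψ^{(1)}_{n₁−k}(x₁) = (1/(2πi)) ∮_{|w|=2} (w(w−1))^{n₁−k} w^{−(x₁+2n₁+1)} e^{a₁w + b₁/w} dw and Φ^{(2)}_{n₂−k}(x₂) = (1/(2πi)) ∮_{|z−1|=r} (2z−1) z^{x₂+2n₂} (z(z−1))^{−(n₂−k+1)} e^{−a₂z − b₂/z} dz with 0 < r < 1/4. Then ∑_{k=1}^{n₂} Ψ^{(1)}_{n₁−k}(x₁) Φ^{(2)}_{n₂−k}(x₂) = (1/(2πi)²) ∮_{|z−1|=r} dz ∮_{|w|=2} dw e^{a₁w + b₁/w − a₂z − b₂/z} (w(w−1))^{n₁} (2z−1) z^{x₂+2n₂} / ( (z(z−1))^{n₂} w^{x₁+2n₁+1} (w−z)(w+z−1) ). -/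

import Mathlib

open Complex MeasureTheory Set
open scoped Real

namespace Stmt11Aux

lemma key_sum (n₁ : ℕ) (A B : ℂ) (hA : A ≠ 0) (hB : B ≠ 0) (hAB : A ≠ B) :
    ∀ n₂ : ℕ, ∑ k ∈ Finset.Icc 1 n₂, A ^ ((n₁:ℤ) - k) * B ^ (-((n₂:ℤ) - k + 1))
      = (A ^ (n₁:ℤ) * B ^ (-(n₂:ℤ)) - A ^ ((n₁:ℤ) - n₂)) / (A - B) := by
  intro n₂
  induction n₂ with
  | zero => simp
  | succ n ih =>
    rw [Finset.sum_Icc_succ_top (by omega : 1 ≤ n + 1)]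
    have key : ∀ k : ℕ, B ^ (-((((n:ℕ)+1:ℕ):ℤ) - k + 1)) = B ^ (-((n:ℤ) - k + 1)) * B⁻¹ := by
      intro k
      rw [← zpow_neg_one B, ← zpow_add₀ hB]
      congr 1; push_cast; ring
    simp only [key]
    have hs : ∑ k ∈ Finset.Icc 1 n, A ^ ((n₁:ℤ) - k) * (B ^ (-((n:ℤ) - k + 1)) * B⁻¹)
        = (∑ k ∈ Finset.Icc 1 n, A ^ ((n₁:ℤ) - k) * B ^ (-((n:ℤ) - k + 1))) * B⁻¹ := by
      rw [Finset.sum_mul]; congr 1; ext k; ring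
    rw [hs, ih]
    have hAB' : A - B ≠ 0 := sub_ne_zero.mpr hAB
    have e1 : A ^ ((n₁:ℤ) - (((n:ℕ)+1:ℕ):ℤ)) = A ^ ((n₁:ℤ) - n) * A⁻¹ := by
      rw [← zpow_neg_one A, ← zpow_add₀ hA]; congr 1; push_cast; ring
    have e2 : B ^ (-(((n:ℕ)+1:ℕ):ℤ)) = B ^ (-(n:ℤ)) * B⁻¹ := by
      rw [← zpow_neg_one B, ← zpow_add₀ hB]; congr 1; push_cast; ring
    have e3 : B ^ (-((n:ℤ) - (((n:ℕ)+1:ℕ):ℤ) + 1)) = 1 := by norm_num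
    rw [e1, e2, e3]
    generalize A ^ (n₁:ℤ) = a at *
    generalize B ^ (-(n:ℤ)) = v at *
    generalize A ^ ((n₁:ℤ) - (n:ℤ)) = c at *
    field_simp
    ring

lemma frac_helper (E Q Y U V C P D₁ D₂ : ℂ) :
    E * (P⁻¹ * Q * Y) * ((U * V⁻¹ - C) / (D₁ * D₂))
      = E * U * Q * Y / (V * P * D₁ * D₂) - E * C * Q * Y / (P * D₁ * D₂) := by
  simp only [div_eq_mul_inv, mul_inv]
  ring

/-- The `Ψ` integrand. -/
noncomputable def Fker (n₁ : ℕ) (x₁ : ℤ) (a₁ b₁ : ℝ) (k : ℕ) (w : ℂ) : ℂ :=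
  (w * (w - 1)) ^ ((n₁ : ℤ) - k) * w ^ (-(x₁ + 2 * (n₁ : ℤ) + 1)) *
    Complex.exp ((a₁ : ℂ) * w + (b₁ : ℂ) / w)

/-- The `Φ` integrand. -/
noncomputable def Gker (n₂ : ℕ) (x₂ : ℤ) (a₂ b₂ : ℝ) (k : ℕ) (z : ℂ) : ℂ :=
  (2 * z - 1) * z ^ (x₂ + 2 * (n₂ : ℤ)) * (z * (z - 1)) ^ (-((n₂ : ℤ) - k + 1)) *
    Complex.exp (-((a₂ : ℂ) * z) - (b₂ : ℂ) / z)

/-- The main double-integrand. -/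
noncomputable def MainKer (n₁ n₂ : ℕ) (x₁ x₂ : ℤ) (a₁ b₁ a₂ b₂ : ℝ) (z w : ℂ) : ℂ :=
  Complex.exp ((a₁ : ℂ) * w + (b₁ : ℂ) / w - (a₂ : ℂ) * z - (b₂ : ℂ) / z) *
      (w * (w - 1)) ^ n₁ * (2 * z - 1) * z ^ (x₂ + 2 * (n₂ : ℤ)) /
      ((z * (z - 1)) ^ n₂ * w ^ (x₁ + 2 * (n₁ : ℤ) + 1) * (w - z) * (w + z - 1))

/-- The correction term (holomorphic in `z` near `1`). -/
noncomputable def CorrKer (n₁ n₂ : ℕ) (x₁ x₂ : ℤ) (a₁ b₁ a₂ b₂ : ℝ) (z w : ℂ) : ℂ :=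
  Complex.exp ((a₁ : ℂ) * w + (b₁ : ℂ) / w - (a₂ : ℂ) * z - (b₂ : ℂ) / z) *
      (w * (w - 1)) ^ ((n₁ : ℤ) - (n₂ : ℤ)) * (2 * z - 1) * z ^ (x₂ + 2 * (n₂ : ℤ)) /
      (w ^ (x₁ + 2 * (n₁ : ℤ) + 1) * (w - z) * (w + z - 1))

lemma pointwise_id (n₁ n₂ : ℕ) (x₁ x₂ : ℤ) (a₁ b₁ a₂ b₂ : ℝ) (z w : ℂ)
    (hz0 : z ≠ 0) (hz1 : z - 1 ≠ 0) (hw0 : w ≠ 0) (hw1 : w - 1 ≠ 0)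
    (hwz : w - z ≠ 0) (hwz1 : w + z - 1 ≠ 0) :
    ∑ k ∈ Finset.Icc 1 n₂, Fker n₁ x₁ a₁ b₁ k w * Gker n₂ x₂ a₂ b₂ k z
      = MainKer n₁ n₂ x₁ x₂ a₁ b₁ a₂ b₂ z w - CorrKer n₁ n₂ x₁ x₂ a₁ b₁ a₂ b₂ z w := by
  have hA : w * (w - 1) ≠ 0 := mul_ne_zero hw0 hw1
  have hB : z * (z - 1) ≠ 0 := mul_ne_zero hz0 hz1
  have hdiff : w * (w - 1) - z * (z - 1) = (w - z) * (w + z - 1) := by ring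
  have hABne : w * (w - 1) - z * (z - 1) ≠ 0 := by
    rw [hdiff]; exact mul_ne_zero hwz hwz1
  have hAB : w * (w - 1) ≠ z * (z - 1) := sub_ne_zero.mp hABne
  have hexp : ∀ k : ℕ, Fker n₁ x₁ a₁ b₁ k w * Gker n₂ x₂ a₂ b₂ k z
      = (Complex.exp ((a₁ : ℂ) * w + (b₁ : ℂ) / w - (a₂ : ℂ) * z - (b₂ : ℂ) / z) *
          (w ^ (-(x₁ + 2 * (n₁ : ℤ) + 1)) * (2 * z - 1) * z ^ (x₂ + 2 * (n₂ : ℤ)))) *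
        ((w * (w - 1)) ^ ((n₁ : ℤ) - k) * (z * (z - 1)) ^ (-((n₂ : ℤ) - k + 1))) := by
    intro k
    have hEE : Complex.exp ((a₁ : ℂ) * w + (b₁ : ℂ) / w - (a₂ : ℂ) * z - (b₂ : ℂ) / z)
        = Complex.exp ((a₁ : ℂ) * w + (b₁ : ℂ) / w) *
          Complex.exp (-((a₂ : ℂ) * z) - (b₂ : ℂ) / z) := by
      rw [← Complex.exp_add]; congr 1; ring
    rw [Fker, Gker, hEE]
    ring
  simp only [hexp]
  rw [← Finset.mul_sum, key_sum n₁ _ _ hA hB hAB n₂]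
  have e1 : (w * (w - 1)) ^ ((n₁ : ℤ)) = (w * (w - 1)) ^ n₁ := zpow_natCast _ _
  have e2 : (z * (z - 1)) ^ (-(n₂ : ℤ)) = ((z * (z - 1)) ^ n₂)⁻¹ := by
    rw [zpow_neg, zpow_natCast]
  have e3 : w ^ (-(x₁ + 2 * (n₁ : ℤ) + 1)) = (w ^ (x₁ + 2 * (n₁ : ℤ) + 1))⁻¹ := zpow_neg _ _
  rw [e1, e2, e3, hdiff, MainKer, CorrKer]
  exact frac_helper _ _ _ _ _ _ _ _ _

lemma circleIntegral_finset_sum {ι : Type*} (s : Finset ι) (f : ι → ℂ → ℂ) (c : ℂ) (R : ℝ)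
    (h : ∀ i ∈ s, CircleIntegrable (f i) c R) :
    (∮ z in C(c, R), ∑ i ∈ s, f i z) = ∑ i ∈ s, ∮ z in C(c, R), f i z := by
  simp only [circleIntegral, smul_eq_mul, Finset.mul_sum]
  rw [intervalIntegral.integral_finset_sum]
  intro i hi
  exact ((h i hi).out).congr (fun θ _ => by simp [smul_eq_mul])

lemma circleIntegral_swap (K : ℂ → ℂ → ℂ) (c₁ c₂ : ℂ) (R₁ R₂ : ℝ)
    (hK : Continuous fun p : ℝ × ℝ => K (circleMap c₁ R₁ p.1) (circleMap c₂ R₂ p.2)) :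
    (∮ z in C(c₁, R₁), ∮ w in C(c₂, R₂), K z w)
      = ∮ w in C(c₂, R₂), ∮ z in C(c₁, R₁), K z w := by
  have hd₁ : Continuous fun θ : ℝ => deriv (circleMap c₁ R₁) θ := by
    simp only [deriv_circleMap]; fun_prop
  have hd₂ : Continuous fun θ : ℝ => deriv (circleMap c₂ R₂) θ := by
    simp only [deriv_circleMap]; fun_prop
  have hg : Continuous fun p : ℝ × ℝ =>
      deriv (circleMap c₁ R₁) p.1 * (deriv (circleMap c₂ R₂) p.2 *
        K (circleMap c₁ R₁ p.1) (circleMap c₂ R₂ p.2)) :=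
    (hd₁.comp continuous_fst).mul ((hd₂.comp continuous_snd).mul hK)
  simp only [circleIntegral_def_Icc, smul_eq_mul]
  have h1 : ∀ θ : ℝ, deriv (circleMap c₁ R₁) θ *
      (∫ φ in Icc 0 (2 * π), deriv (circleMap c₂ R₂) φ * K (circleMap c₁ R₁ θ) (circleMap c₂ R₂ φ))
      = ∫ φ in Icc 0 (2 * π), deriv (circleMap c₁ R₁) θ *
          (deriv (circleMap c₂ R₂) φ * K (circleMap c₁ R₁ θ) (circleMap c₂ R₂ φ)) := by
    intro θ; rw [MeasureTheory.integral_const_mul]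
  have h2 : ∀ φ : ℝ, deriv (circleMap c₂ R₂) φ *
      (∫ θ in Icc 0 (2 * π), deriv (circleMap c₁ R₁) θ * K (circleMap c₁ R₁ θ) (circleMap c₂ R₂ φ))
      = ∫ θ in Icc 0 (2 * π), deriv (circleMap c₁ R₁) θ *
          (deriv (circleMap c₂ R₂) φ * K (circleMap c₁ R₁ θ) (circleMap c₂ R₂ φ)) := by
    intro φ
    rw [← MeasureTheory.integral_const_mul]
    congr 1; funext θ; ring
  simp_rw [h1, h2]
  apply MeasureTheory.integral_integral_swap
  rw [Measure.prod_restrict]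
  exact hg.continuousOn.integrableOn_compact (isCompact_Icc.prod isCompact_Icc)

lemma circleIntegral_add {f g : ℂ → ℂ} {c : ℂ} {R : ℝ}
    (hf : CircleIntegrable f c R) (hg : CircleIntegrable g c R) :
    (∮ z in C(c, R), (f z + g z)) = (∮ z in C(c, R), f z) + ∮ z in C(c, R), g z := by
  simp only [circleIntegral, smul_add]
  exact intervalIntegral.integral_add hf.out hg.out

end Stmt11Aux

open Stmt11Aux

theorem stmt11 (n₁ n₂ : ℕ) (hn₁ : 1 ≤ n₁) (hn₂ : 1 ≤ n₂) (x₁ x₂ : ℤ)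
    (a₁ b₁ a₂ b₂ : ℝ) (r : ℝ) (hr0 : 0 < r) (hr1 : r < 1/4) :
    ∑ k ∈ Finset.Icc 1 n₂,
      ((2 * (Real.pi : ℂ) * Complex.I)⁻¹ *
        ∮ w in C(0, 2), (w * (w - 1)) ^ ((n₁ : ℤ) - k) *
          w ^ (-(x₁ + 2 * (n₁ : ℤ) + 1)) *
          Complex.exp ((a₁ : ℂ) * w + (b₁ : ℂ) / w)) *
      ((2 * (Real.pi : ℂ) * Complex.I)⁻¹ *
        ∮ z in C(1, r), (2 * z - 1) * z ^ (x₂ + 2 * (n₂ : ℤ)) *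
          (z * (z - 1)) ^ (-((n₂ : ℤ) - k + 1)) *
          Complex.exp (-((a₂ : ℂ) * z) - (b₂ : ℂ) / z))
    = (2 * (Real.pi : ℂ) * Complex.I)⁻¹ *
        ∮ z in C(1, r), (2 * (Real.pi : ℂ) * Complex.I)⁻¹ *
          ∮ w in C(0, 2),
            Complex.exp ((a₁ : ℂ) * w + (b₁ : ℂ) / w - (a₂ : ℂ) * z - (b₂ : ℂ) / z) *
              (w * (w - 1)) ^ n₁ * (2 * z - 1) * z ^ (x₂ + 2 * (n₂ : ℤ)) /
              ((z * (z - 1)) ^ n₂ * w ^ (x₁ + 2 * (n₁ : ℤ) + 1) *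
                (w - z) * (w + z - 1)) := by
  show (∑ k ∈ Finset.Icc 1 n₂,
      ((2 * (Real.pi : ℂ) * Complex.I)⁻¹ * ∮ w in C(0, 2), Fker n₁ x₁ a₁ b₁ k w) *
      ((2 * (Real.pi : ℂ) * Complex.I)⁻¹ * ∮ z in C(1, r), Gker n₂ x₂ a₂ b₂ k z))
    = (2 * (Real.pi : ℂ) * Complex.I)⁻¹ * ∮ z in C(1, r), (2 * (Real.pi : ℂ) * Complex.I)⁻¹ *
        ∮ w in C(0, 2), MainKer n₁ n₂ x₁ x₂ a₁ b₁ a₂ b₂ z w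
  set c : ℂ := (2 * (Real.pi : ℂ) * Complex.I)⁻¹ with hc
  -- nonvanishing facts
  have hW0 : ∀ w : ℂ, w ∈ Metric.sphere (0:ℂ) 2 → w ≠ 0 := by
    intro w hw h
    rw [mem_sphere_iff_norm, sub_zero] at hw
    rw [h] at hw; norm_num at hw
  have hW1 : ∀ w : ℂ, w ∈ Metric.sphere (0:ℂ) 2 → w - 1 ≠ 0 := by
    intro w hw h
    rw [mem_sphere_iff_norm, sub_zero] at hw
    rw [sub_eq_zero] at h
    rw [h] at hw; norm_num at hw
  have hZ0 : ∀ z : ℂ, z ∈ Metric.closedBall (1:ℂ) r → z ≠ 0 := by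
    intro z hz h
    rw [Metric.mem_closedBall, dist_eq_norm, h] at hz
    norm_num at hz; linarith
  have hZ1 : ∀ z : ℂ, z ∈ Metric.sphere (1:ℂ) r → z - 1 ≠ 0 := by
    intro z hz h
    rw [mem_sphere_iff_norm, h] at hz
    norm_num at hz; linarith
  have hWZ : ∀ w : ℂ, w ∈ Metric.sphere (0:ℂ) 2 → ∀ z : ℂ, z ∈ Metric.closedBall (1:ℂ) r →
      w - z ≠ 0 := by
    intro w hw z hz h
    rw [mem_sphere_iff_norm, sub_zero] at hw
    rw [Metric.mem_closedBall, dist_eq_norm] at hz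
    rw [sub_eq_zero] at h
    subst h
    have h2 : ‖w‖ ≤ ‖w - 1‖ + ‖(1:ℂ)‖ := by
      simpa using norm_add_le (w - 1) 1
    rw [hw, norm_one] at h2
    linarith
  have hWZ1 : ∀ w : ℂ, w ∈ Metric.sphere (0:ℂ) 2 → ∀ z : ℂ, z ∈ Metric.closedBall (1:ℂ) r →
      w + z - 1 ≠ 0 := by
    intro w hw z hz h
    rw [mem_sphere_iff_norm, sub_zero] at hw
    rw [Metric.mem_closedBall, dist_eq_norm] at hz
    have hwzz : w = -(z - 1) := by linear_combination h
    rw [hwzz, norm_neg] at hw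
    rw [hw] at hz
    linarith
  -- continuity of the basic kernels
  have hFc : ∀ k : ℕ, ContinuousOn (Fker n₁ x₁ a₁ b₁ k) (Metric.sphere (0:ℂ) 2) := by
    intro k
    apply ContinuousOn.mul
    apply ContinuousOn.mul
    · exact ((continuous_id.mul (continuous_id.sub continuous_const)).continuousOn).zpow₀ _
        fun w hw => Or.inl (mul_ne_zero (hW0 w hw) (hW1 w hw))
    · exact continuousOn_id.zpow₀ _ fun w hw => Or.inl (hW0 w hw)
    · exact ((continuous_const.mul continuous_id).continuousOn.add
        (continuousOn_const.div continuousOn_id fun w hw => hW0 w hw)).cexp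
  have hGc : ∀ k : ℕ, ContinuousOn (Gker n₂ x₂ a₂ b₂ k) (Metric.sphere (1:ℂ) r) := by
    intro k
    have hsub : ∀ z : ℂ, z ∈ Metric.sphere (1:ℂ) r → z ≠ 0 :=
      fun z hz => hZ0 z (Metric.sphere_subset_closedBall hz)
    apply ContinuousOn.mul
    apply ContinuousOn.mul
    apply ContinuousOn.mul
    · exact ((continuous_const.mul continuous_id).sub continuous_const).continuousOn
    · exact continuousOn_id.zpow₀ _ fun z hz => Or.inl (hsub z hz)
    · exact ((continuous_id.mul (continuous_id.sub continuous_const)).continuousOn).zpow₀ _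
        fun z hz => Or.inl (mul_ne_zero (hsub z hz) (hZ1 z hz))
    · exact (((continuous_const.mul continuous_id).neg.continuousOn).sub
        (continuousOn_const.div continuousOn_id fun z hz => hsub z hz)).cexp
  -- the correction term is holomorphic in `z` on the closed ball
  have hCorrDiff : ∀ w : ℂ, w ∈ Metric.sphere (0:ℂ) 2 → ∀ z : ℂ, z ∈ Metric.closedBall (1:ℂ) r →
      DifferentiableAt ℂ (fun z => CorrKer n₁ n₂ x₁ x₂ a₁ b₁ a₂ b₂ z w) z := by
    intro w hw z hz
    have hz0 := hZ0 z hz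
    have hwz := hWZ w hw z hz
    have hwz1 := hWZ1 w hw z hz
    have hw0 := hW0 w hw
    apply DifferentiableAt.div
    · apply DifferentiableAt.mul
      apply DifferentiableAt.mul
      apply DifferentiableAt.mul
      · apply DifferentiableAt.cexp
        apply DifferentiableAt.sub
        apply DifferentiableAt.sub
        · exact differentiableAt_const _
        · exact (differentiableAt_const _).mul differentiableAt_id
        · exact (differentiableAt_const _).div differentiableAt_id hz0
      · exact differentiableAt_const _
      · exact (differentiableAt_const _).mul differentiableAt_id |>.sub (differentiableAt_const _)
      · exact differentiableAt_zpow.mpr (Or.inl hz0)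
    · apply DifferentiableAt.mul
      apply DifferentiableAt.mul
      · exact differentiableAt_const _
      · exact (differentiableAt_const _).sub differentiableAt_id
      · exact ((differentiableAt_const _).add differentiableAt_id).sub (differentiableAt_const _)
    · exact mul_ne_zero (mul_ne_zero (zpow_ne_zero _ hw0) hwz) hwz1
  -- Cauchy: the correction integral vanishes
  have hCorr0 : ∀ w : ℂ, w ∈ Metric.sphere (0:ℂ) 2 →
      (∮ z in C(1, r), CorrKer n₁ n₂ x₁ x₂ a₁ b₁ a₂ b₂ z w) = 0 := by
    intro w hw
    apply circleIntegral_eq_zero_of_differentiable_on_off_countable hr0.le Set.countable_empty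
    · exact fun z hz => (hCorrDiff w hw z hz).continuousAt.continuousWithinAt
    · exact fun z hz => hCorrDiff w hw z (Metric.ball_subset_closedBall hz.1)
  -- inner z-integral identity
  have hInner : ∀ w : ℂ, w ∈ Metric.sphere (0:ℂ) 2 →
      (∮ z in C(1, r), ∑ k ∈ Finset.Icc 1 n₂, Fker n₁ x₁ a₁ b₁ k w * Gker n₂ x₂ a₂ b₂ k z)
        = ∮ z in C(1, r), MainKer n₁ n₂ x₁ x₂ a₁ b₁ a₂ b₂ z w := by
    intro w hw
    have hsum_int : CircleIntegrable
        (fun z => ∑ k ∈ Finset.Icc 1 n₂, Fker n₁ x₁ a₁ b₁ k w * Gker n₂ x₂ a₂ b₂ k z) 1 r :=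
      (continuousOn_finset_sum _ fun k _ => continuousOn_const.mul (hGc k)).circleIntegrable
        hr0.le
    have hcorr_cont : ContinuousOn (fun z => CorrKer n₁ n₂ x₁ x₂ a₁ b₁ a₂ b₂ z w)
        (Metric.sphere (1:ℂ) r) := fun z hz =>
      (hCorrDiff w hw z (Metric.sphere_subset_closedBall hz)).continuousAt.continuousWithinAt
    have hcorr_int : CircleIntegrable (fun z => CorrKer n₁ n₂ x₁ x₂ a₁ b₁ a₂ b₂ z w) 1 r :=
      hcorr_cont.circleIntegrable hr0.le
    have congr1 : (∮ z in C(1, r), MainKer n₁ n₂ x₁ x₂ a₁ b₁ a₂ b₂ z w)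
        = ∮ z in C(1, r), ((∑ k ∈ Finset.Icc 1 n₂, Fker n₁ x₁ a₁ b₁ k w *
            Gker n₂ x₂ a₂ b₂ k z) + CorrKer n₁ n₂ x₁ x₂ a₁ b₁ a₂ b₂ z w) := by
      apply circleIntegral.integral_congr hr0.le
      intro z hz
      have hzc := Metric.sphere_subset_closedBall hz
      show MainKer n₁ n₂ x₁ x₂ a₁ b₁ a₂ b₂ z w
        = (∑ k ∈ Finset.Icc 1 n₂, Fker n₁ x₁ a₁ b₁ k w * Gker n₂ x₂ a₂ b₂ k z)
          + CorrKer n₁ n₂ x₁ x₂ a₁ b₁ a₂ b₂ z w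
      rw [pointwise_id n₁ n₂ x₁ x₂ a₁ b₁ a₂ b₂ z w (hZ0 z hzc) (hZ1 z hz) (hW0 w hw)
        (hW1 w hw) (hWZ w hw z hzc) (hWZ1 w hw z hzc)]
      ring
    rw [congr1, circleIntegral_add hsum_int hcorr_int, hCorr0 w hw, add_zero]
  -- continuity for Fubini
  have hMainCont : Continuous fun p : ℝ × ℝ =>
      MainKer n₁ n₂ x₁ x₂ a₁ b₁ a₂ b₂ (circleMap 1 r p.2) (circleMap 0 2 p.1) := by
    have hWm : ∀ θ : ℝ, circleMap 0 2 θ ∈ Metric.sphere (0:ℂ) 2 :=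
      fun θ => circleMap_mem_sphere _ (by norm_num) θ
    have hZm : ∀ θ : ℝ, circleMap 1 r θ ∈ Metric.closedBall (1:ℂ) r :=
      fun θ => Metric.sphere_subset_closedBall (circleMap_mem_sphere _ hr0.le θ)
    have hZm' : ∀ θ : ℝ, circleMap 1 r θ ∈ Metric.sphere (1:ℂ) r :=
      fun θ => circleMap_mem_sphere _ hr0.le θ
    have hW : Continuous fun p : ℝ × ℝ => circleMap 0 2 p.1 :=
      (continuous_circleMap 0 2).comp continuous_fst
    have hZ : Continuous fun p : ℝ × ℝ => circleMap 1 r p.2 :=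
      (continuous_circleMap 1 r).comp continuous_snd
    apply Continuous.div
    · apply Continuous.mul
      apply Continuous.mul
      apply Continuous.mul
      · apply Continuous.cexp
        refine (((continuous_const.mul hW).add ?_).sub (continuous_const.mul hZ)).sub ?_
        · exact continuous_const.div hW fun p => hW0 _ (hWm p.1)
        · exact continuous_const.div hZ fun p => hZ0 _ (hZm p.2)
      · exact (hW.mul (hW.sub continuous_const)).pow n₁
      · exact (continuous_const.mul hZ).sub continuous_const
      · exact hZ.zpow₀ _ fun p => Or.inl (hZ0 _ (hZm p.2))
    · apply Continuous.mul
      apply Continuous.mul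
      apply Continuous.mul
      · exact (hZ.mul (hZ.sub continuous_const)).pow n₂
      · exact hW.zpow₀ _ fun p => Or.inl (hW0 _ (hWm p.1))
      · exact hW.sub hZ
      · exact (hW.add hZ).sub continuous_const
    · intro p
      exact mul_ne_zero (mul_ne_zero (mul_ne_zero
        (pow_ne_zero _ (mul_ne_zero (hZ0 _ (hZm p.2)) (hZ1 _ (hZm' p.2))))
        (zpow_ne_zero _ (hW0 _ (hWm p.1)))) (hWZ _ (hWm p.1) _ (hZm p.2)))
        (hWZ1 _ (hWm p.1) _ (hZm p.2))
  -- main chain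
  calc (∑ k ∈ Finset.Icc 1 n₂,
      (c * ∮ w in C(0, 2), Fker n₁ x₁ a₁ b₁ k w) * (c * ∮ z in C(1, r), Gker n₂ x₂ a₂ b₂ k z))
      = ∑ k ∈ Finset.Icc 1 n₂, c * c *
          ∮ w in C(0, 2), ∮ z in C(1, r), Fker n₁ x₁ a₁ b₁ k w * Gker n₂ x₂ a₂ b₂ k z := by
        refine Finset.sum_congr rfl fun k _ => ?_
        have eG : (fun w' : ℂ => ∮ z in C(1, r), Fker n₁ x₁ a₁ b₁ k w' * Gker n₂ x₂ a₂ b₂ k z)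
            = fun w' : ℂ => Fker n₁ x₁ a₁ b₁ k w' * ∮ z in C(1, r), Gker n₂ x₂ a₂ b₂ k z := by
          funext w'
          simpa [smul_eq_mul] using
            circleIntegral.integral_smul (Fker n₁ x₁ a₁ b₁ k w') (Gker n₂ x₂ a₂ b₂ k) 1 r
        have e2 : (∮ w in C(0, 2), Fker n₁ x₁ a₁ b₁ k w *
              (∮ z in C(1, r), Gker n₂ x₂ a₂ b₂ k z))
            = (∮ w in C(0, 2), Fker n₁ x₁ a₁ b₁ k w) * ∮ z in C(1, r), Gker n₂ x₂ a₂ b₂ k z := by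
          simpa [smul_eq_mul] using circleIntegral.integral_smul_const (Fker n₁ x₁ a₁ b₁ k)
            (∮ z in C(1, r), Gker n₂ x₂ a₂ b₂ k z) 0 2
        rw [show (∮ w in C(0, 2), ∮ z in C(1, r), Fker n₁ x₁ a₁ b₁ k w * Gker n₂ x₂ a₂ b₂ k z)
            = ∮ w in C(0, 2), Fker n₁ x₁ a₁ b₁ k w * ∮ z in C(1, r), Gker n₂ x₂ a₂ b₂ k z from by
          rw [eG], e2]
        ring
    _ = c * c * ∮ w in C(0, 2), ∑ k ∈ Finset.Icc 1 n₂,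
          ∮ z in C(1, r), Fker n₁ x₁ a₁ b₁ k w * Gker n₂ x₂ a₂ b₂ k z := by
        rw [← Finset.mul_sum]
        congr 1
        rw [circleIntegral_finset_sum]
        intro k _
        have eG : (fun w' : ℂ => ∮ z in C(1, r), Fker n₁ x₁ a₁ b₁ k w' * Gker n₂ x₂ a₂ b₂ k z)
            = fun w' : ℂ => Fker n₁ x₁ a₁ b₁ k w' * ∮ z in C(1, r), Gker n₂ x₂ a₂ b₂ k z := by
          funext w'
          simpa [smul_eq_mul] using
            circleIntegral.integral_smul (Fker n₁ x₁ a₁ b₁ k w') (Gker n₂ x₂ a₂ b₂ k) 1 r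
        rw [eG]
        exact ((hFc k).mul continuousOn_const).circleIntegrable (by norm_num)
    _ = c * c * ∮ w in C(0, 2), ∮ z in C(1, r),
          ∑ k ∈ Finset.Icc 1 n₂, Fker n₁ x₁ a₁ b₁ k w * Gker n₂ x₂ a₂ b₂ k z := by
        congr 1
        apply circleIntegral.integral_congr (by norm_num : (0:ℝ) ≤ 2)
        intro w hw
        show (∑ k ∈ Finset.Icc 1 n₂, ∮ z in C(1, r), Fker n₁ x₁ a₁ b₁ k w * Gker n₂ x₂ a₂ b₂ k z)
          = ∮ z in C(1, r), ∑ k ∈ Finset.Icc 1 n₂, Fker n₁ x₁ a₁ b₁ k w * Gker n₂ x₂ a₂ b₂ k z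
        exact (circleIntegral_finset_sum _ _ _ _ fun k _ =>
          (continuousOn_const.mul (hGc k)).circleIntegrable hr0.le).symm
    _ = c * c * ∮ w in C(0, 2), ∮ z in C(1, r), MainKer n₁ n₂ x₁ x₂ a₁ b₁ a₂ b₂ z w := by
        congr 1
        exact circleIntegral.integral_congr (by norm_num : (0:ℝ) ≤ 2) fun w hw => hInner w hw
    _ = c * c * ∮ z in C(1, r), ∮ w in C(0, 2), MainKer n₁ n₂ x₁ x₂ a₁ b₁ a₂ b₂ z w := by
        congr 1
        exact circleIntegral_swap (fun w z => MainKer n₁ n₂ x₁ x₂ a₁ b₁ a₂ b₂ z w) 0 1 2 r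
          hMainCont
    _ = c * ∮ z in C(1, r), c * ∮ w in C(0, 2), MainKer n₁ n₂ x₁ x₂ a₁ b₁ a₂ b₂ z w := by
        rw [show (∮ z in C(1, r), c * ∮ w in C(0, 2), MainKer n₁ n₂ x₁ x₂ a₁ b₁ a₂ b₂ z w)
            = c * ∮ z in C(1, r), ∮ w in C(0, 2), MainKer n₁ n₂ x₁ x₂ a₁ b₁ a₂ b₂ z w from by
          simpa [smul_eq_mul] using circleIntegral.integral_smul c
            (fun z => ∮ w in C(0, 2), MainKer n₁ n₂ x₁ x₂ a₁ b₁ a₂ b₂ z w) 1 r]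
        ring
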